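/- Let x_{1,·} = (β₁/(α₁+β₁+1))·(r/(β₁+1) + (1-r)/β₁) and, for w₁ > 1, define x_{w₁,·} by the recursion x_{w₁,·} = ((w₁-1)α₁+β₁)/(w₁α₁+β₁+1) · x_{w₁-1,·}. Then for all w₁ > 1, x_{w₁,·} = Γ(w₁+β₁/α₁)/Γ(β₁/α₁) · Γ(1+(β₁+1)/α₁)/Γ(w₁+1+(β₁+1)/α₁) · (1-r+β₁)/(β₁(β₁+1)). -/
import Mathlib


open Real

theorem marginal_recursion_form (α₁ β₁ r : ℝ) (hα₁ : 0 < α₁) (hβ₁ : 0 < β₁)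
    (hr0 : 0 < r) (hr1 : r < 1) (x : ℕ → ℝ)
    (hx1 : x 1 = (β₁ / (α₁ + β₁ + 1)) * (r / (β₁ + 1) + (1 - r) / β₁))
    (hrec : ∀ w : ℕ, 1 < w →
      x w = (((w : ℝ) - 1) * α₁ + β₁) / ((w : ℝ) * α₁ + β₁ + 1) * x (w - 1)) :
    ∀ w : ℕ, 1 < w →
      x w = Real.Gamma ((w : ℝ) + β₁ / α₁) / Real.Gamma (β₁ / α₁) *
        (Real.Gamma (1 + (β₁ + 1) / α₁) / Real.Gamma ((w : ℝ) + 1 + (β₁ + 1) / α₁)) *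
        ((1 - r + β₁) / (β₁ * (β₁ + 1))) := by
  have hα₁' : α₁ ≠ 0 := ne_of_gt hα₁
  have hβ₁' : β₁ ≠ 0 := ne_of_gt hβ₁
  have hb : (0:ℝ) < β₁ / α₁ := div_pos hβ₁ hα₁
  have hc : (0:ℝ) < (β₁ + 1) / α₁ := div_pos (by linarith) hα₁
  have hΓb : Real.Gamma (β₁ / α₁) ≠ 0 := ne_of_gt (Real.Gamma_pos_of_pos hb)
  have key : ∀ w : ℕ, 1 ≤ w →
      x w = Real.Gamma ((w : ℝ) + β₁ / α₁) / Real.Gamma (β₁ / α₁) *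
        (Real.Gamma (1 + (β₁ + 1) / α₁) / Real.Gamma ((w : ℝ) + 1 + (β₁ + 1) / α₁)) *
        ((1 - r + β₁) / (β₁ * (β₁ + 1))) := by
    intro w hw
    induction w, hw using Nat.le_induction with
    | base =>
      have h1 : Real.Gamma (((1:ℕ):ℝ) + β₁ / α₁) = (β₁ / α₁) * Real.Gamma (β₁ / α₁) := by
        push_cast
        rw [add_comm, Real.Gamma_add_one (ne_of_gt hb)]
      have h2 : Real.Gamma (((1:ℕ):ℝ) + 1 + (β₁ + 1) / α₁)
          = (1 + (β₁ + 1) / α₁) * Real.Gamma (1 + (β₁ + 1) / α₁) := by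
        have : (((1:ℕ):ℝ) + 1 + (β₁ + 1) / α₁) = (1 + (β₁ + 1) / α₁) + 1 := by push_cast; ring
        rw [this, Real.Gamma_add_one (by positivity)]
      have hΓc : Real.Gamma (1 + (β₁ + 1) / α₁) ≠ 0 :=
        ne_of_gt (Real.Gamma_pos_of_pos (by positivity))
      rw [hx1, h1, h2]
      have hden : α₁ + β₁ + 1 ≠ 0 := by positivity
      have hβ1 : β₁ + 1 ≠ 0 := by positivity
      have h1c : 1 + (β₁ + 1) / α₁ ≠ 0 := by positivity
      field_simp
      ring
    | succ w hw ih =>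
      have hcast : ((w + 1 : ℕ) : ℝ) = (w : ℝ) + 1 := by push_cast; ring
      have hrw := hrec (w + 1) (by omega)
      simp only [Nat.add_sub_cancel] at hrw
      rw [hrw, ih, hcast]
      have hwb : (0:ℝ) < (w : ℝ) + β₁ / α₁ := by positivity
      have hwc : (0:ℝ) < (w : ℝ) + 1 + (β₁ + 1) / α₁ := by positivity
      have h1 : Real.Gamma ((w : ℝ) + 1 + β₁ / α₁)
          = ((w : ℝ) + β₁ / α₁) * Real.Gamma ((w : ℝ) + β₁ / α₁) := by
        have : (w : ℝ) + 1 + β₁ / α₁ = ((w : ℝ) + β₁ / α₁) + 1 := by ring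
        rw [this, Real.Gamma_add_one (ne_of_gt hwb)]
      have h2 : Real.Gamma ((w : ℝ) + 1 + 1 + (β₁ + 1) / α₁)
          = ((w : ℝ) + 1 + (β₁ + 1) / α₁) * Real.Gamma ((w : ℝ) + 1 + (β₁ + 1) / α₁) := by
        have : (w : ℝ) + 1 + 1 + (β₁ + 1) / α₁ = ((w : ℝ) + 1 + (β₁ + 1) / α₁) + 1 := by ring
        rw [this, Real.Gamma_add_one (ne_of_gt hwc)]
      rw [h1, h2]
      have hΓwc : Real.Gamma ((w : ℝ) + 1 + (β₁ + 1) / α₁) ≠ 0 :=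
        ne_of_gt (Real.Gamma_pos_of_pos hwc)
      have hden : (w : ℝ) * α₁ + β₁ + 1 > 0 := by positivity
      have hden2 : ((w : ℝ) + 1) * α₁ + β₁ + 1 > 0 := by positivity
      have hβ1 : β₁ + 1 ≠ 0 := by positivity
      field_simp
      ring
  intro w hw
  exact key w (le_of_lt hw)
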